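/- The formal power series identity ∑_{n≥1} E_{2n-1} z^{2n-1}/(2n-1)! = tan(z) holds, where E_{2n-1} is the number of alternating permutations of [2n-1]. -/

import Mathlib

def desSet {m : ℕ} (σ : Equiv.Perm (Fin m)) : Set ℕ :=
  {i | ∃ h : i < m, 0 < i ∧
    σ ⟨i, h⟩ < σ ⟨i - 1, lt_of_le_of_lt (Nat.sub_le i 1) h⟩}

noncomputable def altEuler (m : ℕ) : ℕ :=
  Nat.card {σ : Equiv.Perm (Fin m) // desSet σ = {i | 0 < i ∧ i < m ∧ 2 ∣ i}}

/-- Alternating word condition. -/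
def IsAlt {m : ℕ} (w : Fin m → Fin m) : Prop :=
  ∀ k, ∀ h : k + 1 < m, (w ⟨k + 1, h⟩ < w ⟨k, Nat.lt_of_succ_lt h⟩ ↔ Odd k)

lemma desSet_eq_iff_isAlt {m : ℕ} (σ : Equiv.Perm (Fin m)) :
    desSet σ = {i | 0 < i ∧ i < m ∧ 2 ∣ i} ↔ IsAlt ⇑σ := by
  constructor
  · intro h k hk
    have h2 := Set.ext_iff.mp h (k + 1)
    simp only [desSet, Set.mem_setOf_eq, Nat.add_sub_cancel] at h2
    constructor
    · intro hlt
      have := (h2.mp ⟨hk, by omega, hlt⟩).2.2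
      rw [Nat.odd_iff]; omega
    · intro hodd
      refine (h2.mpr ⟨by omega, hk, ?_⟩).choose_spec.2
      rw [Nat.odd_iff] at hodd; omega
  · intro h
    ext i
    simp only [desSet, Set.mem_setOf_eq]
    constructor
    · rintro ⟨hi, hpos, hlt⟩
      refine ⟨hpos, hi, ?_⟩
      have hk : i - 1 + 1 < m := by omega
      have := (h (i - 1) hk).mp (by simpa only [Nat.sub_add_cancel hpos] using hlt)
      rw [Nat.odd_iff] at this; omega
    · rintro ⟨hpos, hi, hdvd⟩
      refine ⟨hi, hpos, ?_⟩
      have hk : i - 1 + 1 < m := by omega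
      have := (h (i - 1) hk).mpr (by rw [Nat.odd_iff]; omega)
      simpa only [Nat.sub_add_cancel hpos] using this
    
lemma altEuler_eq_card (m : ℕ) :
    altEuler m = Nat.card {σ : Equiv.Perm (Fin m) // IsAlt ⇑σ} :=
  Nat.card_congr (Equiv.subtypeEquivRight fun σ => desSet_eq_iff_isAlt σ)

lemma altEuler_one : altEuler 1 = 1 := by
  rw [altEuler_eq_card]
  have h : ∀ σ : Equiv.Perm (Fin 1), IsAlt ⇑σ := fun σ k hk => absurd hk (by omega)
  rw [Nat.card_congr (Equiv.subtypeUnivEquiv h), Nat.card_eq_fintype_card]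
  simp

lemma altEuler_le (m : ℕ) : altEuler m ≤ Nat.factorial m := by
  have h := Nat.card_le_card_of_injective
    (fun σ : {σ : Equiv.Perm (Fin m) // desSet σ = {i | 0 < i ∧ i < m ∧ 2 ∣ i}} => σ.1)
    Subtype.val_injective
  rw [show Nat.card (Equiv.Perm (Fin m)) = m.factorial from by
    rw [Nat.card_eq_fintype_card, Fintype.card_perm, Fintype.card_fin]] at h
  exact h

section Main

variable (n i : ℕ)

lemma compl_card (hi : i ≤ n) (S : Finset (Fin (2 * n + 2))) (hS : S.card = 2 * i + 1) :
    Sᶜ.card = 2 * (n - i) + 1 := by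
  rw [Finset.card_compl, hS, Fintype.card_fin]; omega

/-- The glued word: left alternating block on value-set `S`, max in the middle,
right alternating block on `Sᶜ`. -/
def wFun (hi : i ≤ n) (S : Finset (Fin (2 * n + 2))) (hS : S.card = 2 * i + 1)
    (σL : Equiv.Perm (Fin (2 * i + 1))) (σR : Equiv.Perm (Fin (2 * (n - i) + 1)))
    (k : Fin (2 * n + 3)) : Fin (2 * n + 3) :=
  if h1 : (k : ℕ) < 2 * i + 1 then
    Fin.castSucc ((S.orderIsoOfFin hS (σL ⟨k, h1⟩) : Fin (2 * n + 2)))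
  else if h2 : (k : ℕ) = 2 * i + 1 then Fin.last (2 * n + 2)
  else
    Fin.castSucc ((Sᶜ.orderIsoOfFin (compl_card n i hi S hS)
      (σR ⟨(k : ℕ) - (2 * i + 2), by have := k.isLt; omega⟩) : Fin (2 * n + 2)))

variable (hi : i ≤ n) (S : Finset (Fin (2 * n + 2))) (hS : S.card = 2 * i + 1)
    (σL : Equiv.Perm (Fin (2 * i + 1))) (σR : Equiv.Perm (Fin (2 * (n - i) + 1)))

lemma wFun_injective : Function.Injective (wFun n i hi S hS σL σR) := by
  intro k k' h
  unfold wFun at h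
  split_ifs at h with h1 h1' h2' h1' h2 h2' h1' h2'
  · have h3 : σL ⟨k, h1⟩ = σL ⟨k', h1'⟩ :=
      (S.orderIsoOfFin hS).injective (Subtype.coe_injective (Fin.castSucc_injective _ h))
    have h4 := congrArg Fin.val (σL.injective h3)
    exact Fin.ext h4
  · exact absurd h (Fin.castSucc_lt_last _).ne
  · rw [Fin.castSucc_inj] at h
    have hm := (S.orderIsoOfFin hS (σL ⟨k, h1⟩)).2
    rw [h] at hm
    exact absurd hm (Finset.mem_compl.mp (Sᶜ.orderIsoOfFin _ _).2)
  · exact absurd h.symm (Fin.castSucc_lt_last _).ne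
  · exact Fin.ext (by omega)
  · exact absurd h (Fin.castSucc_lt_last _).ne'
  · rw [Fin.castSucc_inj] at h
    have hm := (S.orderIsoOfFin hS (σL ⟨k', h1'⟩)).2
    rw [← h] at hm
    exact absurd hm (Finset.mem_compl.mp (Sᶜ.orderIsoOfFin _ _).2)
  · exact absurd h.symm (Fin.castSucc_lt_last _).ne'
  · have h3 : σR ⟨(k:ℕ) - (2*i+2), _⟩ = σR ⟨(k':ℕ) - (2*i+2), _⟩ :=
      (Sᶜ.orderIsoOfFin _).injective (Subtype.coe_injective (Fin.castSucc_injective _ h))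
    have h4 := congrArg Fin.val (σR.injective h3)
    have h5 : (k:ℕ) - (2*i+2) = (k':ℕ) - (2*i+2) := h4
    exact Fin.ext (by omega)

lemma wFun_isAlt (hL : IsAlt ⇑σL) (hR : IsAlt ⇑σR) :
    IsAlt (wFun n i hi S hS σL σR) := by
  intro k hk
  unfold wFun
  simp only [show ((⟨k+1, hk⟩ : Fin (2*n+3)) : ℕ) = k + 1 from rfl,
    show ((⟨k, Nat.lt_of_succ_lt hk⟩ : Fin (2*n+3)) : ℕ) = k from rfl]
  rcases lt_trichotomy (k + 1) (2 * i + 1) with hA | hA | hA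
  · rw [dif_pos hA, dif_pos (show k < 2*i+1 by omega)]
    rw [Fin.castSucc_lt_castSucc_iff, Subtype.coe_lt_coe, OrderIso.lt_iff_lt]
    exact hL k hA
  · rw [dif_neg (by omega), dif_pos hA, dif_pos (show k < 2*i+1 by omega)]
    exact iff_of_false (Fin.castSucc_lt_last _).asymm (by rw [Nat.odd_iff]; omega)
  · rcases eq_or_lt_of_le (Nat.succ_le_of_lt hA) with hB | hB
    · rw [dif_neg (by omega), dif_neg (by omega), dif_neg (by omega),
        dif_pos (show k = 2*i+1 by omega)]
      exact iff_of_true (Fin.castSucc_lt_last _) (by rw [Nat.odd_iff]; omega)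
    · rw [dif_neg (by omega), dif_neg (by omega), dif_neg (by omega), dif_neg (by omega)]
      rw [Fin.castSucc_lt_castSucc_iff, Subtype.coe_lt_coe, OrderIso.lt_iff_lt]
      have hj : (k - (2*i+2)) + 1 < 2 * (n - i) + 1 := by omega
      simp only [show k + 1 - (2*i+2) = (k - (2*i+2)) + 1 from by omega]
      rw [hR (k - (2*i+2)) hj, Nat.odd_iff, Nat.odd_iff]
      omega

lemma wFun_apply_left (k : ℕ) (hk : k < 2 * i + 1) :
    wFun n i hi S hS σL σR ⟨k, by omega⟩ =
      Fin.castSucc (S.orderIsoOfFin hS (σL ⟨k, hk⟩)) := by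
  unfold wFun
  rw [dif_pos hk]

lemma wFun_apply_mid :
    wFun n i hi S hS σL σR ⟨2 * i + 1, by omega⟩ = Fin.last (2 * n + 2) := by
  unfold wFun
  simp only [show ((⟨2 * i + 1, by omega⟩ : Fin (2 * n + 3)) : ℕ) = 2 * i + 1 from rfl]
  rw [dif_neg (by omega)]
  simp

lemma wFun_apply_right (j : ℕ) (hj : j < 2 * (n - i) + 1) :
    wFun n i hi S hS σL σR ⟨j + (2 * i + 2), by omega⟩ =
      Fin.castSucc (Sᶜ.orderIsoOfFin (compl_card n i hi S hS) (σR ⟨j, hj⟩)) := by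
  unfold wFun
  simp only [show ((⟨j + (2 * i + 2), by omega⟩ : Fin (2 * n + 3)) : ℕ) = j + (2 * i + 2) from rfl]
  rw [dif_neg (by omega), dif_neg (by omega)]
  simp only [show j + (2 * i + 2) - (2 * i + 2) = j from by omega]

lemma wFun_mem_S_iff (v : Fin (2 * n + 2)) :
    v ∈ S ↔ ∃ k, ∃ hk : k < 2 * i + 1,
      wFun n i hi S hS σL σR ⟨k, by omega⟩ = Fin.castSucc v := by
  constructor
  · intro hv
    refine ⟨σL.symm ((S.orderIsoOfFin hS).symm ⟨v, hv⟩), (σL.symm _).isLt, ?_⟩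
    rw [wFun_apply_left n i hi S hS σL σR _ (σL.symm _).isLt]
    simp [Fin.eta]
  · rintro ⟨k, hk, hkeq⟩
    rw [wFun_apply_left n i hi S hS σL σR k hk, Fin.castSucc_inj] at hkeq
    rw [← hkeq]
    exact (S.orderIsoOfFin hS _).2

end Main

abbrev AltPerm (m : ℕ) := {σ : Equiv.Perm (Fin m) // IsAlt ⇑σ}

abbrev Dec (n : ℕ) := Σ i : Fin (n + 1),
  {S : Finset (Fin (2 * n + 2)) // S.card = 2 * (i : ℕ) + 1} ×
    AltPerm (2 * (i : ℕ) + 1) × AltPerm (2 * (n - (i : ℕ)) + 1)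

noncomputable def Phi (n : ℕ) : Dec n → AltPerm (2 * n + 3) := fun t =>
  ⟨Equiv.ofBijective
      (wFun n t.1 (Nat.lt_succ_iff.mp t.1.isLt) t.2.1.1 t.2.1.2 t.2.2.1.1 t.2.2.2.1)
      ((Finite.injective_iff_bijective).mp
        (wFun_injective n t.1 (Nat.lt_succ_iff.mp t.1.isLt) t.2.1.1 t.2.1.2 t.2.2.1.1 t.2.2.2.1)),
   wFun_isAlt n t.1 (Nat.lt_succ_iff.mp t.1.isLt) t.2.1.1 t.2.1.2 t.2.2.1.1 t.2.2.2.1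
     t.2.2.1.2 t.2.2.2.2⟩

lemma Phi_injective (n : ℕ) : Function.Injective (Phi n) := by
  rintro ⟨i, ⟨S, hS⟩, ⟨σL, hL⟩, ⟨σR, hR⟩⟩ ⟨i', ⟨S', hS'⟩, ⟨σL', hL'⟩, ⟨σR', hR'⟩⟩ h
  have hi : (i : ℕ) ≤ n := Nat.lt_succ_iff.mp i.isLt
  have hi' : (i' : ℕ) ≤ n := Nat.lt_succ_iff.mp i'.isLt
  have hw : wFun n i hi S hS σL σR = wFun n i' hi' S' hS' σL' σR' :=
    congrArg (fun t : AltPerm (2 * n + 3) => (t.1 : Fin (2 * n + 3) → Fin (2 * n + 3))) h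
  -- step 1 : i = i'
  have e1 : wFun n i' hi' S' hS' σL' σR' ⟨2 * (i : ℕ) + 1, by omega⟩ =
      wFun n i' hi' S' hS' σL' σR' ⟨2 * (i' : ℕ) + 1, by omega⟩ := by
    rw [← congrFun hw ⟨2 * (i : ℕ) + 1, by omega⟩,
      wFun_apply_mid n i hi S hS σL σR, wFun_apply_mid n i' hi' S' hS' σL' σR']
  have e2 := congrArg Fin.val (wFun_injective n i' hi' S' hS' σL' σR' e1)
  have e3 : 2 * (i : ℕ) + 1 = 2 * (i' : ℕ) + 1 := e2
  have : i = i' := Fin.ext (by omega)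
  subst this
  -- step 2 : S = S'
  have hSS : S = S' := by
    ext v
    rw [wFun_mem_S_iff n i hi S hS σL σR v, wFun_mem_S_iff n i hi S' hS' σL' σR' v]
    constructor
    · rintro ⟨k, hk, hkeq⟩; exact ⟨k, hk, by rw [← congrFun hw ⟨k, by omega⟩]; exact hkeq⟩
    · rintro ⟨k, hk, hkeq⟩; exact ⟨k, hk, by rw [congrFun hw ⟨k, by omega⟩]; exact hkeq⟩
  subst hSS
  -- step 3 : σL = σL'
  have hLL : σL = σL' := by
    apply Equiv.ext
    intro j
    have e4 := congrFun hw ⟨(j : ℕ), by omega⟩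
    rw [wFun_apply_left n i hi S hS σL σR _ j.isLt,
      wFun_apply_left n i hi S hS' σL' σR' _ j.isLt, Fin.castSucc_inj] at e4
    have e5 := (S.orderIsoOfFin hS).injective (Subtype.ext e4)
    simpa [Fin.eta] using e5
  subst hLL
  -- step 4 : σR = σR'
  have hRR : σR = σR' := by
    apply Equiv.ext
    intro j
    have e4 := congrFun hw ⟨(j : ℕ) + (2 * (i : ℕ) + 2), by omega⟩
    rw [wFun_apply_right n i hi S hS σL σR _ j.isLt,
      wFun_apply_right n i hi S hS' σL σR' _ j.isLt, Fin.castSucc_inj] at e4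
    have e5 := (Sᶜ.orderIsoOfFin (compl_card n i hi S hS)).injective (Subtype.ext e4)
    simpa [Fin.eta] using e5
  subst hRR
  rfl

section Surj

variable (n i : ℕ) (hi : i ≤ n) (w : Equiv.Perm (Fin (2 * n + 3)))
  (hmax : ((w.symm (Fin.last (2 * n + 2))) : ℕ) = 2 * i + 1)

/-- The set of values used in the left block. -/
def Sof : Finset (Fin (2 * n + 2)) :=
  Finset.univ.filter (fun v => ((w.symm (Fin.castSucc v)) : ℕ) < 2 * i + 1)

lemma mem_Sof (v : Fin (2 * n + 2)) :
    v ∈ Sof n i w ↔ ((w.symm (Fin.castSucc v)) : ℕ) < 2 * i + 1 := by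
  simp [Sof]

include hmax in
lemma hne_of (k : ℕ) (hk : k < 2 * n + 3) (hki : k ≠ 2 * i + 1) :
    w ⟨k, hk⟩ ≠ Fin.last (2 * n + 2) := by
  intro hc
  have h2 : w.symm (Fin.last (2 * n + 2)) = ⟨k, hk⟩ := by
    rw [← hc, Equiv.symm_apply_apply]
  have h3 : ((w.symm (Fin.last (2 * n + 2))) : ℕ) = k := congrArg Fin.val h2
  exact hki (by omega)

include hi hmax

lemma mem_Sof_L (k : ℕ) (hk : k < 2 * i + 1) :
    (w ⟨k, by omega⟩).castPred (hne_of n i w hmax k (by omega) (by omega)) ∈ Sof n i w := by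
  rw [mem_Sof, Fin.castSucc_castPred, Equiv.symm_apply_apply]
  exact hk

lemma mem_Sof_R (j : ℕ) (hj : j < 2 * (n - i) + 1) :
    (w ⟨j + (2 * i + 2), by omega⟩).castPred
      (hne_of n i w hmax _ (by omega) (by omega)) ∈ (Sof n i w)ᶜ := by
  rw [Finset.mem_compl, mem_Sof, Fin.castSucc_castPred, Equiv.symm_apply_apply]
  exact (by omega : ¬ (j + (2 * i + 2) < 2 * i + 1))

lemma Sof_card : (Sof n i w).card = 2 * i + 1 := by
  apply Finset.card_eq_of_bijective
    (fun k hk => (w ⟨k, by omega⟩).castPred (hne_of n i w hmax k (by omega) (by omega)))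
  · intro v hv
    refine ⟨((w.symm (Fin.castSucc v)) : ℕ), (mem_Sof n i w v).mp hv, ?_⟩
    refine Fin.castSucc_injective _ ?_
    rw [Fin.castSucc_castPred]
    show w ⟨((w.symm (Fin.castSucc v)) : ℕ), _⟩ = Fin.castSucc v
    have he : (⟨((w.symm (Fin.castSucc v)) : ℕ), by omega⟩ : Fin (2 * n + 3)) =
        w.symm (Fin.castSucc v) := Fin.eta _ _
    rw [he, Equiv.apply_symm_apply]
  · exact fun k hk => mem_Sof_L n i hi w hmax k hk
  · intro k j hk hj heq
    have h2 := congrArg Fin.castSucc heq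
    rw [Fin.castSucc_castPred, Fin.castSucc_castPred] at h2
    exact congrArg Fin.val (w.injective h2)

/-- Left standardized word. -/
def fLof : Fin (2 * i + 1) → Fin (2 * i + 1) := fun k =>
  ((Sof n i w).orderIsoOfFin (Sof_card n i hi w hmax)).symm
    ⟨(w ⟨(k : ℕ), by have := k.isLt; omega⟩).castPred
        (hne_of n i w hmax _ (by have := k.isLt; omega) (by have := k.isLt; omega)),
      mem_Sof_L n i hi w hmax _ k.isLt⟩

/-- Right standardized word. -/
def fRof : Fin (2 * (n - i) + 1) → Fin (2 * (n - i) + 1) := fun j =>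
  ((Sof n i w)ᶜ.orderIsoOfFin
      ((compl_card n i hi (Sof n i w) (Sof_card n i hi w hmax)))).symm
    ⟨(w ⟨(j : ℕ) + (2 * i + 2), by have := j.isLt; omega⟩).castPred
        (hne_of n i w hmax _ (by have := j.isLt; omega) (by have := j.isLt; omega)),
      mem_Sof_R n i hi w hmax _ j.isLt⟩

lemma fLof_injective : Function.Injective (fLof n i hi w hmax) := by
  intro a b hab
  unfold fLof at hab
  have h3 := Subtype.ext_iff.mp (OrderIso.injective _ hab)
  have h4 := congrArg Fin.castSucc h3
  rw [Fin.castSucc_castPred, Fin.castSucc_castPred] at h4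
  have h5 := congrArg Fin.val (w.injective h4)
  have h6 : (a : ℕ) = (b : ℕ) := h5
  exact Fin.ext h6

lemma fRof_injective : Function.Injective (fRof n i hi w hmax) := by
  intro a b hab
  unfold fRof at hab
  have h3 := Subtype.ext_iff.mp (OrderIso.injective _ hab)
  have h4 := congrArg Fin.castSucc h3
  rw [Fin.castSucc_castPred, Fin.castSucc_castPred] at h4
  have h5 := congrArg Fin.val (w.injective h4)
  have h6 : (a : ℕ) + (2 * i + 2) = (b : ℕ) + (2 * i + 2) := h5
  exact Fin.ext (by omega)

lemma fLof_isAlt (hw : IsAlt ⇑w) : IsAlt (fLof n i hi w hmax) := by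
  intro k hk
  unfold fLof
  rw [OrderIso.lt_iff_lt, Subtype.mk_lt_mk, ← Fin.castSucc_lt_castSucc_iff,
    Fin.castSucc_castPred, Fin.castSucc_castPred]
  exact hw k (by omega)

lemma fRof_isAlt (hw : IsAlt ⇑w) : IsAlt (fRof n i hi w hmax) := by
  intro k hk
  unfold fRof
  rw [OrderIso.lt_iff_lt, Subtype.mk_lt_mk, ← Fin.castSucc_lt_castSucc_iff,
    Fin.castSucc_castPred, Fin.castSucc_castPred]
  simp only [show ((⟨k + 1, hk⟩ : Fin (2 * (n - i) + 1)) : ℕ) = k + 1 from rfl,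
    show ((⟨k, Nat.lt_of_succ_lt hk⟩ : Fin (2 * (n - i) + 1)) : ℕ) = k from rfl,
    show k + 1 + (2 * i + 2) = (k + (2 * i + 2)) + 1 from by omega]
  rw [hw (k + (2 * i + 2)) (by omega), Nat.odd_iff, Nat.odd_iff]
  omega

lemma fLof_spec (k : Fin (2 * i + 1)) :
    Fin.castSucc (((Sof n i w).orderIsoOfFin (Sof_card n i hi w hmax))
        (fLof n i hi w hmax k) : Fin (2 * n + 2)) =
      w ⟨(k : ℕ), by have := k.isLt; omega⟩ := by
  unfold fLof
  rw [OrderIso.apply_symm_apply]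
  exact Fin.castSucc_castPred (w ⟨(k : ℕ), by have := k.isLt; omega⟩)
    (hne_of n i w hmax (k : ℕ) (by have := k.isLt; omega) (by have := k.isLt; omega))

lemma fRof_spec (j : Fin (2 * (n - i) + 1)) :
    Fin.castSucc ((((Sof n i w)ᶜ).orderIsoOfFin
        (compl_card n i hi (Sof n i w) (Sof_card n i hi w hmax)))
        (fRof n i hi w hmax j) : Fin (2 * n + 2)) =
      w ⟨(j : ℕ) + (2 * i + 2), by have := j.isLt; omega⟩ := by
  unfold fRof
  rw [OrderIso.apply_symm_apply]
  exact Fin.castSucc_castPred (w ⟨(j : ℕ) + (2 * i + 2), by have := j.isLt; omega⟩)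
    (hne_of n i w hmax ((j : ℕ) + (2 * i + 2)) (by have := j.isLt; omega)
      (by have := j.isLt; omega))

end Surj

set_option maxHeartbeats 1000000 in
lemma Phi_surjective (n : ℕ) : Function.Surjective (Phi n) := by
  rintro ⟨w, hw⟩
  have hplt := (w.symm (Fin.last (2 * n + 2))).isLt
  have hodd : ((w.symm (Fin.last (2 * n + 2))) : ℕ) % 2 = 1 := by
    set p := w.symm (Fin.last (2 * n + 2)) with hpdef
    have hwp : w p = Fin.last (2 * n + 2) := w.apply_symm_apply _
    by_contra hev
    rcases Nat.eq_zero_or_pos (p : ℕ) with h0 | hpos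
    · have h01 := hw 0 (by omega)
      have hq : (⟨0, by omega⟩ : Fin (2 * n + 3)) = p :=
        Fin.ext (show (0 : ℕ) = (p : ℕ) from by omega)
      have hlast : w ⟨0, by omega⟩ = Fin.last (2 * n + 2) := by rw [hq, hwp]
      have hnlt : ¬ (w ⟨0 + 1, by omega⟩ < w ⟨0, by omega⟩) := fun hc =>
        (by simp [Nat.odd_iff] : ¬ Odd 0) (h01.mp hc)
      have hle : w ⟨0 + 1, by omega⟩ ≤ w ⟨0, by omega⟩ := by
        rw [hlast]; exact Fin.le_last _
      have heq := le_antisymm hle (not_lt.mp hnlt)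
      have h5 := congrArg Fin.val (w.injective heq)
      have h6 : (0 : ℕ) + 1 = 0 := h5
      omega
    · have hk := hw ((p : ℕ) - 1) (by omega)
      have hlt : w ⟨(p : ℕ) - 1 + 1, by omega⟩ < w ⟨(p : ℕ) - 1, by omega⟩ :=
        hk.mpr (by rw [Nat.odd_iff]; omega)
      have hq : (⟨(p : ℕ) - 1 + 1, by omega⟩ : Fin (2 * n + 3)) = p :=
        Fin.ext (show (p : ℕ) - 1 + 1 = (p : ℕ) from by omega)
      rw [hq, hwp] at hlt
      exact absurd hlt (not_lt.mpr (Fin.le_last _))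
  obtain ⟨i, hpi⟩ : ∃ i, ((w.symm (Fin.last (2 * n + 2))) : ℕ) = 2 * i + 1 :=
    ⟨(((w.symm (Fin.last (2 * n + 2))) : ℕ) - 1) / 2, by omega⟩
  have hi : i ≤ n := by omega
  set σL : Equiv.Perm (Fin (2 * i + 1)) :=
    Equiv.ofBijective (fLof n i hi w hpi)
      ((Finite.injective_iff_bijective).mp (fLof_injective n i hi w hpi)) with hσL
  set σR : Equiv.Perm (Fin (2 * (n - i) + 1)) :=
    Equiv.ofBijective (fRof n i hi w hpi)
      ((Finite.injective_iff_bijective).mp (fRof_injective n i hi w hpi)) with hσR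
  refine ⟨⟨⟨i, by omega⟩, ⟨Sof n i w, Sof_card n i hi w hpi⟩,
    ⟨σL, fLof_isAlt n i hi w hpi hw⟩, ⟨σR, fRof_isAlt n i hi w hpi hw⟩⟩, ?_⟩
  apply Subtype.ext
  apply Equiv.ext
  intro k
  show wFun n i hi (Sof n i w) (Sof_card n i hi w hpi) σL σR ⟨(k : ℕ), k.isLt⟩ = w k
  rcases lt_trichotomy ((k : ℕ)) (2 * i + 1) with hA | hA | hA
  · rw [wFun_apply_left n i hi (Sof n i w) (Sof_card n i hi w hpi) σL σR (k : ℕ) hA]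
    exact fLof_spec n i hi w hpi ⟨(k : ℕ), hA⟩
  · have hqk : k = ⟨2 * i + 1, by omega⟩ := Fin.ext (show (k : ℕ) = 2 * i + 1 from hA)
    rw [hqk, wFun_apply_mid n i hi (Sof n i w) (Sof_card n i hi w hpi) σL σR]
    have hq2 : (⟨2 * i + 1, by omega⟩ : Fin (2 * n + 3)) = w.symm (Fin.last (2 * n + 2)) :=
      Fin.ext (show 2 * i + 1 = ((w.symm (Fin.last (2 * n + 2))) : ℕ) from by omega)
    rw [hq2, Equiv.apply_symm_apply]
  · have hqk : k = ⟨(k : ℕ) - (2 * i + 2) + (2 * i + 2), by omega⟩ :=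
      Fin.ext (show (k : ℕ) = (k : ℕ) - (2 * i + 2) + (2 * i + 2) from by omega)
    rw [hqk, wFun_apply_right n i hi (Sof n i w) (Sof_card n i hi w hpi) σL σR
      ((k : ℕ) - (2 * i + 2)) (by omega)]
    exact fRof_spec n i hi w hpi ⟨(k : ℕ) - (2 * i + 2), by omega⟩

lemma card_subtype_finset (n l : ℕ) :
    Nat.card {S : Finset (Fin (2 * n + 2)) // S.card = l} = (2 * n + 2).choose l := by
  rw [Nat.card_congr (Equiv.subtypeEquivRight
    (fun S : Finset (Fin (2 * n + 2)) => (Finset.mem_powersetCard_univ).symm)),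
    Nat.card_eq_fintype_card, Fintype.card_coe, Finset.card_powersetCard,
    Finset.card_univ, Fintype.card_fin]

lemma card_Dec (n : ℕ) : Nat.card (Dec n) =
    ∑ i ∈ Finset.range (n + 1),
      ((2 * n + 2).choose (2 * i + 1)) * (altEuler (2 * i + 1) * altEuler (2 * (n - i) + 1)) := by
  letI : ∀ m, Fintype (AltPerm m) := fun m => Fintype.ofFinite _
  rw [Nat.card_eq_fintype_card, Fintype.card_sigma,
    ← Fin.sum_univ_eq_sum_range (fun i =>
      ((2 * n + 2).choose (2 * i + 1)) *
        (altEuler (2 * i + 1) * altEuler (2 * (n - i) + 1))) (n + 1)]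
  apply Finset.sum_congr rfl
  intro i _
  rw [Fintype.card_prod, Fintype.card_prod]
  congr 1
  · rw [← Nat.card_eq_fintype_card, card_subtype_finset]
  · congr 1 <;> rw [← Nat.card_eq_fintype_card, ← altEuler_eq_card]

lemma altEuler_rec (n : ℕ) :
    altEuler (2 * n + 3) = ∑ i ∈ Finset.range (n + 1),
      ((2 * n + 2).choose (2 * i + 1)) * (altEuler (2 * i + 1) * altEuler (2 * (n - i) + 1)) := by
  have h1 := Nat.card_eq_of_bijective (Phi n) ⟨Phi_injective n, Phi_surjective n⟩
  rw [altEuler_eq_card, ← h1, card_Dec]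

noncomputable def aSeq (n : ℕ) : ℝ := (altEuler (2 * n + 1) : ℝ) / (Nat.factorial (2 * n + 1) : ℝ)

lemma aSeq_nonneg (n : ℕ) : 0 ≤ aSeq n := by
  unfold aSeq; positivity

lemma aSeq_le_one (n : ℕ) : aSeq n ≤ 1 := by
  unfold aSeq
  rw [div_le_one (by positivity)]
  exact_mod_cast altEuler_le (2 * n + 1)

lemma aSeq_zero : aSeq 0 = 1 := by
  unfold aSeq
  norm_num [altEuler_one]

lemma aSeq_rec (n : ℕ) :
    (2 * (n : ℝ) + 3) * aSeq (n + 1) = ∑ i ∈ Finset.range (n + 1), aSeq i * aSeq (n - i) := by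
  have h3 : ((2 * n + 2).factorial : ℝ) ≠ 0 := Nat.cast_ne_zero.mpr (Nat.factorial_ne_zero _)
  have key : ∀ i ∈ Finset.range (n + 1),
      (((2 * n + 2).choose (2 * i + 1) * (altEuler (2 * i + 1) * altEuler (2 * (n - i) + 1)) : ℕ) : ℝ)
        / ((2 * n + 2).factorial : ℝ) = aSeq i * aSeq (n - i) := by
    intro i hi
    rw [Finset.mem_range] at hi
    have hin : i ≤ n := by omega
    have hch := Nat.choose_mul_factorial_mul_factorial (show 2 * i + 1 ≤ 2 * n + 2 by omega)
    rw [show 2 * n + 2 - (2 * i + 1) = 2 * (n - i) + 1 from by omega] at hch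
    have hch' : (((2 * n + 2).choose (2 * i + 1) : ℕ) : ℝ) * ((2 * i + 1).factorial : ℝ) *
        ((2 * (n - i) + 1).factorial : ℝ) = ((2 * n + 2).factorial : ℝ) := by
      exact_mod_cast congrArg (Nat.cast (R := ℝ)) hch
    have h1 : ((2 * i + 1).factorial : ℝ) ≠ 0 := Nat.cast_ne_zero.mpr (Nat.factorial_ne_zero _)
    have h2 : ((2 * (n - i) + 1).factorial : ℝ) ≠ 0 := Nat.cast_ne_zero.mpr (Nat.factorial_ne_zero _)
    have h0 : (((2 * n + 2).choose (2 * i + 1)) : ℝ) ≠ 0 :=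
      Nat.cast_ne_zero.mpr (Nat.choose_pos (by omega)).ne'
    unfold aSeq
    rw [← hch']
    push_cast
    field_simp
  have hfac : ((2 * (n + 1) + 1).factorial : ℝ) = (2 * (n : ℝ) + 3) * ((2 * n + 2).factorial : ℝ) := by
    rw [show 2 * (n + 1) + 1 = (2 * n + 2) + 1 from by ring, Nat.factorial_succ]
    push_cast; ring
  have hlhs : (2 * (n : ℝ) + 3) * aSeq (n + 1) = (altEuler (2 * n + 3) : ℝ) / ((2 * n + 2).factorial : ℝ) := by
    unfold aSeq
    rw [show 2 * (n + 1) + 1 = 2 * n + 3 from by ring] at hfac ⊢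
    rw [hfac]
    have h23 : (2 * (n : ℝ) + 3) ≠ 0 := by positivity
    field_simp
  rw [hlhs, altEuler_rec n]
  rw [Nat.cast_sum, Finset.sum_div]
  exact Finset.sum_congr rfl (fun i hi => key i hi)

noncomputable def cSeq : ℕ → ℝ := fun m =>
  if m % 2 = 1 then (altEuler m : ℝ) / (Nat.factorial m : ℝ) else 0

lemma cSeq_odd (n : ℕ) : cSeq (2 * n + 1) = aSeq n := by
  unfold cSeq aSeq; rw [if_pos (by omega)]

lemma cSeq_even (m : ℕ) (h : m % 2 = 0) : cSeq m = 0 := by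
  unfold cSeq; rw [if_neg (by omega)]

lemma cSeq_nonneg (m : ℕ) : 0 ≤ cSeq m := by
  unfold cSeq; split <;> positivity

lemma cSeq_le_one (m : ℕ) : cSeq m ≤ 1 := by
  unfold cSeq; split
  · rw [div_le_one (by positivity)]
    exact_mod_cast altEuler_le m
  · norm_num

lemma abs_cSeq_le_one (m : ℕ) : |cSeq m| ≤ 1 :=
  abs_le.mpr ⟨by linarith [cSeq_nonneg m], cSeq_le_one m⟩

noncomputable def pSer : FormalMultilinearSeries ℝ ℝ ℝ :=
  FormalMultilinearSeries.ofScalars ℝ cSeq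

lemma pSer_radius : 1 ≤ pSer.radius := by
  have h := FormalMultilinearSeries.le_radius_of_bound pSer 1 (r := 1) ?_
  · simpa using h
  · intro n
    unfold pSer
    rw [FormalMultilinearSeries.ofScalars_norm]
    simp [Real.norm_eq_abs, abs_cSeq_le_one n]

lemma pSer_coeff (n : ℕ) : (FormalMultilinearSeries.ofScalars ℝ cSeq).coeff n = cSeq n := by
  have h := FormalMultilinearSeries.ofScalars_apply_eq (E := ℝ) (c := cSeq) 1 n
  rw [one_pow, smul_eq_mul, mul_one] at h
  exact h

noncomputable def gFun : ℝ → ℝ := pSer.sum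

lemma hgball : HasFPowerSeriesOnBall gFun pSer 0 1 :=
  (pSer.hasFPowerSeriesOnBall (lt_of_lt_of_le zero_lt_one pSer_radius)).mono zero_lt_one pSer_radius

lemma hmem {y : ℝ} (hy : |y| < 1) : y ∈ Metric.eball (0 : ℝ) 1 := by
  simp [Metric.mem_eball, edist_dist, dist_zero_right, Real.norm_eq_abs, ENNReal.ofReal_lt_one, hy]

lemma hgsum {y : ℝ} (hy : |y| < 1) : HasSum (fun m => cSeq m * y ^ m) (gFun y) := by
  have h := hgball.hasSum (hmem hy)
  rw [zero_add] at h
  simp only [pSer, FormalMultilinearSeries.ofScalars_apply_eq, smul_eq_mul] at h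
  exact h

lemma hgodd {y : ℝ} (hy : |y| < 1) :
    HasSum (fun n : ℕ => aSeq n * y ^ (2 * n + 1)) (gFun y) := by
  have h1 : ∀ m ∉ Set.range (fun n : ℕ => 2 * n + 1), cSeq m * y ^ m = 0 := by
    intro m hm
    have hp : m % 2 = 0 := by
      by_contra h2
      exact hm ⟨m / 2, show 2 * (m / 2) + 1 = m by omega⟩
    rw [cSeq_even m hp, zero_mul]
  have h2 := (Function.Injective.hasSum_iff (g := fun n : ℕ => 2 * n + 1)
    (fun a b hab => by
      have hab' : 2 * a + 1 = 2 * b + 1 := hab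
      omega) h1).mpr (hgsum hy)
  simpa [Function.comp_def, cSeq_odd] using h2

lemma hDsummable {y : ℝ} (hy : |y| < 1) :
    Summable (fun m : ℕ => ((m : ℝ) + 1) * cSeq (m + 1) * y ^ m) := by
  have hb : Summable (fun m : ℕ => ((m : ℝ) + 1) * |y| ^ m) := by
    have h1 := summable_pow_mul_geometric_of_norm_lt_one (R := ℝ) 1
      (r := |y|) (by rwa [Real.norm_eq_abs, abs_abs])
    have h2 := summable_geometric_of_lt_one (abs_nonneg y) hy
    exact (h1.add h2).congr (fun m => by push_cast; ring)
  apply Summable.of_norm_bounded hb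
  intro m
  have he : ‖((m : ℝ) + 1) * cSeq (m + 1) * y ^ m‖ = ((m : ℝ) + 1) * |cSeq (m + 1)| * |y| ^ m := by
    rw [Real.norm_eq_abs, abs_mul, abs_mul, abs_pow,
      abs_of_nonneg (by positivity : (0:ℝ) ≤ (m : ℝ) + 1)]
  rw [he]
  calc ((m : ℝ) + 1) * |cSeq (m + 1)| * |y| ^ m ≤ ((m : ℝ) + 1) * 1 * |y| ^ m := by
        gcongr
        exact abs_cSeq_le_one _
    _ = ((m : ℝ) + 1) * |y| ^ m := by ring

noncomputable def dSum (y : ℝ) : ℝ := ∑' m : ℕ, ((m : ℝ) + 1) * cSeq (m + 1) * y ^ m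

lemma hDhasSum {y : ℝ} (hy : |y| < 1) :
    HasSum (fun m : ℕ => ((m : ℝ) + 1) * cSeq (m + 1) * y ^ m) (dSum y) :=
  (hDsummable hy).hasSum

lemma g_hasDerivAt (y : ℝ) (hy : |y| < 1) : HasDerivAt gFun (dSum y) y := by
  have hdiffAt : DifferentiableAt ℝ gFun y := ((hgball.analyticOnNhd) y (hmem hy)).differentiableAt
  have hDeriv := hdiffAt.hasDerivAt
  rcases eq_or_ne y 0 with rfl | hy0
  · have hd0 : deriv gFun 0 = cSeq 1 := by
      have hfs := hgball.factorial_smul (1 : ℝ) 1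
      simp only [iteratedFDeriv_one_apply] at hfs
      norm_num [pSer, FormalMultilinearSeries.ofScalars_apply_eq, fderiv_apply_one_eq_deriv,
        pSer_coeff] at hfs
      exact hfs.symm
    have hd0' : dSum 0 = cSeq 1 := by
      unfold dSum
      rw [tsum_eq_single 0 ?_]
      · norm_num
      · intro m hm
        simp [zero_pow hm]
    rw [show dSum 0 = deriv gFun 0 from by rw [hd0, hd0']]
    exact hDeriv
  · have hf' := hgball.fderiv
    have hs := hf'.hasSum (hmem hy)
    rw [zero_add] at hs
    have hs2 := hs.mapL (ContinuousLinearMap.apply ℝ ℝ y)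
    simp only [ContinuousLinearMap.apply_apply] at hs2
    have hterm : ∀ n : ℕ, (pSer.derivSeries n (fun _ => y)) y =
        y * (((n : ℝ) + 1) * cSeq (n + 1) * y ^ n) := by
      intro n
      rw [FormalMultilinearSeries.derivSeries_apply_diag]
      simp [pSer, FormalMultilinearSeries.ofScalars_apply_eq, smul_eq_mul, pSer_coeff]
      ring
    simp only [hterm] at hs2
    have hs4 := (hDhasSum hy).mul_left y
    have huniq : (fderiv ℝ gFun y) y = y * dSum y := hs2.unique hs4
    have hfd : (fderiv ℝ gFun y) y = y * deriv gFun y := by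
      calc (fderiv ℝ gFun y) y = (fderiv ℝ gFun y) (y • (1 : ℝ)) := by norm_num
        _ = y • (fderiv ℝ gFun y) (1 : ℝ) := (fderiv ℝ gFun y).map_smul y 1
        _ = y * deriv gFun y := by rw [smul_eq_mul, fderiv_apply_one_eq_deriv]
    have hde : deriv gFun y = dSum y := mul_left_cancel₀ hy0 (hfd.symm.trans huniq)
    rw [← hde]
    exact hDeriv

lemma dSum_eq (y : ℝ) (hy : |y| < 1) : dSum y = 1 + gFun y * gFun y := by
  have h1 : ∀ m ∉ Set.range (fun n : ℕ => 2 * n),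
      ((m : ℝ) + 1) * cSeq (m + 1) * y ^ m = 0 := by
    intro m hm
    have hp : (m + 1) % 2 = 0 := by
      by_contra h2
      exact hm ⟨m / 2, show 2 * (m / 2) = m by omega⟩
    rw [cSeq_even _ hp]; ring
  have hDodd : HasSum (fun n : ℕ => (2 * (n : ℝ) + 1) * aSeq n * y ^ (2 * n)) (dSum y) := by
    have h2 := (Function.Injective.hasSum_iff (g := fun n : ℕ => 2 * n)
      (fun a b hab => by
        have hab' : 2 * a = 2 * b := hab
        omega) h1).mpr (hDhasSum hy)
    have h3 : ∀ n : ℕ, (((2 * n : ℕ) : ℝ) + 1) * cSeq (2 * n + 1) * y ^ (2 * n) =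
        (2 * (n : ℝ) + 1) * aSeq n * y ^ (2 * n) := by
      intro n
      rw [cSeq_odd]
      push_cast
      ring
    simpa [Function.comp_def, cSeq_odd] using h2
  have hshift : HasSum (fun n : ℕ => (2 * ((n : ℝ) + 1) + 1) * aSeq (n + 1) * y ^ (2 * (n + 1)))
      (dSum y - 1) := by
    have hiff := hasSum_nat_add_iff
      (f := fun n : ℕ => (2 * (n : ℝ) + 1) * aSeq n * y ^ (2 * n)) (g := dSum y - 1) 1
    rw [Finset.sum_range_one] at hiff
    have hf0 : (2 * ((0:ℕ) : ℝ) + 1) * aSeq 0 * y ^ (2 * 0) = 1 := by simp [aSeq_zero]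
    rw [hf0] at hiff
    have := hiff.mpr (by simpa using hDodd)
    simpa [] using this
  have hsf : Summable (fun n : ℕ => ‖aSeq n * y ^ (2 * n + 1)‖) := by
    have hb : Summable (fun n : ℕ => |y| ^ (2 * n + 1)) := by
      have hg : Summable (fun n : ℕ => |y| * (|y| ^ 2) ^ n) :=
        (summable_geometric_of_lt_one (by positivity)
          (by nlinarith [abs_nonneg y])).mul_left |y|
      exact hg.congr (fun n => by rw [pow_add, pow_mul, pow_one]; ring)
    apply Summable.of_nonneg_of_le (fun n => norm_nonneg _) ?_ hb
    intro n
    rw [Real.norm_eq_abs, abs_mul, abs_pow]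
    calc |aSeq n| * |y| ^ (2 * n + 1) ≤ 1 * |y| ^ (2 * n + 1) := by
          gcongr
          rw [abs_of_nonneg (aSeq_nonneg n)]
          exact aSeq_le_one n
      _ = |y| ^ (2 * n + 1) := one_mul _
  have hgsq : gFun y * gFun y = ∑' n : ℕ, ∑ kl ∈ Finset.HasAntidiagonal.antidiagonal n,
      (aSeq kl.1 * y ^ (2 * kl.1 + 1)) * (aSeq kl.2 * y ^ (2 * kl.2 + 1)) := by
    rw [← (hgodd hy).tsum_eq]
    exact tsum_mul_tsum_eq_tsum_sum_antidiagonal_of_summable_norm hsf hsf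
  have hterm : ∀ n : ℕ, ∑ kl ∈ Finset.HasAntidiagonal.antidiagonal n,
      (aSeq kl.1 * y ^ (2 * kl.1 + 1)) * (aSeq kl.2 * y ^ (2 * kl.2 + 1)) =
      (2 * ((n : ℝ) + 1) + 1) * aSeq (n + 1) * y ^ (2 * (n + 1)) := by
    intro n
    rw [Finset.Nat.sum_antidiagonal_eq_sum_range_succ_mk]
    have hstep : ∀ k ∈ Finset.range (n + 1),
        (aSeq k * y ^ (2 * k + 1)) * (aSeq (n - k) * y ^ (2 * (n - k) + 1)) =
        (aSeq k * aSeq (n - k)) * y ^ (2 * (n + 1)) := by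
      intro k hk
      rw [Finset.mem_range] at hk
      rw [show 2 * (n + 1) = (2 * k + 1) + (2 * (n - k) + 1) from by omega, pow_add]
      ring
    rw [Finset.sum_congr rfl hstep, ← Finset.sum_mul, ← aSeq_rec n]
    push_cast
    ring
  have hfin : dSum y - 1 = gFun y * gFun y := by
    rw [hgsq, ← hshift.tsum_eq]
    exact tsum_congr (fun n => (hterm n).symm)
  linarith

lemma g_zero : gFun 0 = 0 := by
  have h := hgodd (y := 0) (by norm_num)
  have h2 : (fun n : ℕ => aSeq n * (0 : ℝ) ^ (2 * n + 1)) = fun _ => 0 :=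
    funext fun n => by simp
  rw [h2] at h
  exact h.unique hasSum_zero

lemma arctan_comp (t : ℝ) (ht : |t| < 1) :
    HasDerivAt (fun s => Real.arctan (gFun s) - s) 0 t := by
  have h1 := (Real.hasDerivAt_arctan (gFun t)).comp t (g_hasDerivAt t ht)
  have h2 := h1.sub (hasDerivAt_id t)
  have h3 : 1 / (1 + gFun t ^ 2) * dSum t - 1 = 0 := by
    rw [dSum_eq t ht]
    have h4 : 1 + gFun t ^ 2 ≠ 0 := by positivity
    field_simp
    ring
  rw [h3] at h2
  exact h2

lemma g_eq_tan (x : ℝ) (hx : |x| < 1) : gFun x = Real.tan x := by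
  have habs := abs_lt.mp hx
  have key : Real.arctan (gFun x) = x := by
    rcases le_or_gt 0 x with hx0 | hx0
    · have hc := constant_of_has_deriv_right_zero
        (f := fun s => Real.arctan (gFun s) - s) (a := 0) (b := x)
        (fun t ht => by
          rw [Set.mem_Icc] at ht
          exact (arctan_comp t (by rw [abs_lt]; constructor <;> linarith)).continuousAt.continuousWithinAt)
        (fun t ht => by
          rw [Set.mem_Ico] at ht
          exact (arctan_comp t (by rw [abs_lt]; constructor <;> linarith)).hasDerivWithinAt)
        x (Set.mem_Icc.mpr ⟨hx0, le_refl x⟩)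
      have hc' : Real.arctan (gFun x) - x = Real.arctan (gFun 0) - 0 := hc
      rw [g_zero, Real.arctan_zero] at hc'
      linarith
    · have hc := constant_of_has_deriv_right_zero
        (f := fun s => Real.arctan (gFun s) - s) (a := x) (b := 0)
        (fun t ht => by
          rw [Set.mem_Icc] at ht
          exact (arctan_comp t (by rw [abs_lt]; constructor <;> linarith)).continuousAt.continuousWithinAt)
        (fun t ht => by
          rw [Set.mem_Ico] at ht
          exact (arctan_comp t (by rw [abs_lt]; constructor <;> linarith)).hasDerivWithinAt)
        0 (Set.mem_Icc.mpr ⟨le_of_lt hx0, le_refl 0⟩)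
      have hc' : Real.arctan (gFun 0) - 0 = Real.arctan (gFun x) - x := hc
      rw [g_zero, Real.arctan_zero] at hc'
      linarith
  conv_rhs => rw [← key]
  rw [Real.tan_arctan]

noncomputable def cC : ℕ → ℂ := fun m => ((cSeq m : ℝ) : ℂ)

noncomputable def qC : FormalMultilinearSeries ℂ ℂ ℂ :=
  FormalMultilinearSeries.ofScalars ℂ cC

lemma qC_radius : 1 ≤ qC.radius := by
  have h := FormalMultilinearSeries.le_radius_of_bound qC 1 (r := 1) ?_
  · simpa using h
  · intro n
    unfold qC
    rw [FormalMultilinearSeries.ofScalars_norm]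
    simp [cC, Complex.norm_real, Real.norm_eq_abs, abs_cSeq_le_one n]

noncomputable def gC : ℂ → ℂ := qC.sum

lemma hgCball : HasFPowerSeriesOnBall gC qC 0 1 :=
  (qC.hasFPowerSeriesOnBall (lt_of_lt_of_le zero_lt_one qC_radius)).mono zero_lt_one qC_radius

lemma hmemC {z : ℂ} (hz : ‖z‖ < 1) : z ∈ Metric.eball (0 : ℂ) 1 := by
  rw [Metric.mem_eball, edist_dist, dist_zero_right]
  exact ENNReal.ofReal_lt_one.mpr hz

lemma gC_real {t : ℝ} (ht : |t| < 1) : gC t = ((gFun t : ℝ) : ℂ) := by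
  have h1 := hgCball.hasSum (hmemC (z := (t : ℂ)) (by rwa [Complex.norm_real, Real.norm_eq_abs]))
  rw [zero_add] at h1
  simp only [qC, FormalMultilinearSeries.ofScalars_apply_eq, smul_eq_mul] at h1
  have h2 := (hgsum ht).mapL Complex.ofRealCLM
  have h3 : (fun m => Complex.ofRealCLM (cSeq m * t ^ m)) = fun m => cC m * (t : ℂ) ^ m := by
    funext m
    simp [cC]
  rw [h3] at h2
  exact h1.unique h2

lemma cos_ne_zero_of_lt {z : ℂ} (hz : ‖z‖ < Real.pi / 2) : Complex.cos z ≠ 0 := by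
  intro hc
  rw [Complex.cos_eq_zero_iff] at hc
  obtain ⟨k, hk⟩ := hc
  have hrw : ((2 * (k : ℂ) + 1) * (Real.pi : ℂ) / 2) = (((2 * (k : ℝ) + 1) * Real.pi / 2 : ℝ) : ℂ) := by
    push_cast; ring
  rw [hk, hrw, Complex.norm_real, Real.norm_eq_abs] at hz
  have hπ := Real.pi_pos
  have h1 : |(2 * (k : ℝ) + 1) * Real.pi / 2| = |2 * (k : ℝ) + 1| * (Real.pi / 2) := by
    rw [abs_div, abs_mul, abs_of_pos hπ, abs_two]
    ring
  have h2 : 1 ≤ |2 * (k : ℝ) + 1| := by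
    have hz2 : (2 * k + 1 : ℤ) ≠ 0 := by omega
    have := Int.one_le_abs hz2
    have hcast : |2 * (k : ℝ) + 1| = ((|2 * k + 1| : ℤ) : ℝ) := by push_cast; ring_nf
    rw [hcast]
    exact_mod_cast this
  rw [h1] at hz
  nlinarith

lemma tan_diff {R : ℝ} (hR : R < Real.pi / 2) :
    DifferentiableOn ℂ Complex.tan (Metric.closedBall 0 R) := by
  intro z hz
  rw [Metric.mem_closedBall, dist_zero_right] at hz
  exact (Complex.differentiableAt_tan.mpr
    (cos_ne_zero_of_lt (lt_of_le_of_lt hz hR))).differentiableWithinAt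

lemma emetric_ball_one : Metric.eball (0 : ℂ) 1 = Metric.ball (0 : ℂ) 1 := by
  have h1 : ((1 : NNReal) : ENNReal) = 1 := ENNReal.coe_one
  rw [← h1, Metric.eball_coe]
  norm_num

lemma tan_analyticBall1 : AnalyticOnNhd ℂ Complex.tan (Metric.eball (0 : ℂ) 1) := by
  rw [emetric_ball_one]
  apply DifferentiableOn.analyticOnNhd ?_ Metric.isOpen_ball
  intro z hz
  rw [Metric.mem_ball, dist_zero_right] at hz
  have hπ := Real.pi_gt_three
  exact (Complex.differentiableAt_tan.mpr
    (cos_ne_zero_of_lt (lt_trans hz (by linarith)))).differentiableWithinAt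

lemma gC_eq_tan : Set.EqOn gC Complex.tan (Metric.eball (0 : ℂ) 1) := by
  apply AnalyticOnNhd.eqOn_of_preconnected_of_frequently_eq
    (hgCball.analyticOnNhd) tan_analyticBall1 ?_ (z₀ := 0) ?_ ?_
  · rw [emetric_ball_one]
    exact (convex_ball (0 : ℂ) 1).isPreconnected
  · exact Metric.mem_eball_self (by norm_num)
  · have htends : Filter.Tendsto (fun k : ℕ => ((1 / ((k : ℝ) + 1) : ℝ) : ℂ))
        Filter.atTop (nhdsWithin 0 {0}ᶜ) := by
      rw [tendsto_nhdsWithin_iff]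
      constructor
      · have h := tendsto_one_div_add_atTop_nhds_zero_nat (𝕜 := ℝ)
        have h2 := (Complex.continuous_ofReal.tendsto 0).comp h
        rw [Complex.ofReal_zero] at h2
        exact h2
      · filter_upwards with k
        simp only [Set.mem_compl_iff, Set.mem_singleton_iff]
        intro hc
        have : (1 / ((k : ℝ) + 1) : ℝ) = 0 := by exact_mod_cast hc
        have : (0 : ℝ) < 1 / ((k : ℝ) + 1) := by positivity
        linarith
    apply htends.frequently
    apply Filter.Eventually.frequently
    filter_upwards [Filter.eventually_ge_atTop 1] with k hk
    have hlt : |1 / ((k : ℝ) + 1)| < 1 := by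
      rw [abs_of_pos (by positivity), div_lt_one (by positivity)]
      have : (1 : ℝ) ≤ (k : ℝ) := by exact_mod_cast hk
      linarith
    rw [gC_real hlt, g_eq_tan _ hlt, Complex.ofReal_tan]

theorem stmt_1 (x : ℝ) (hx : |x| < Real.pi / 2) :
    HasSum (fun n : ℕ =>
      (altEuler (2 * n + 1) : ℝ) * x ^ (2 * n + 1) / (Nat.factorial (2 * n + 1) : ℝ))
      (Real.tan x) := by
  have hπ := Real.pi_pos
  set R : NNReal := Real.toNNReal ((|x| + Real.pi / 2) / 2) with hRdef
  have habs := abs_nonneg x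
  have hRcoe : (R : ℝ) = (|x| + Real.pi / 2) / 2 := Real.coe_toNNReal _ (by positivity)
  have hxR : |x| < (R : ℝ) := by rw [hRcoe]; linarith
  have hRπ : (R : ℝ) < Real.pi / 2 := by rw [hRcoe]; linarith
  have hR0 : 0 < R := by
    rw [← NNReal.coe_lt_coe, hRcoe]
    positivity
  have hp := (tan_diff hRπ).hasFPowerSeriesOnBall hR0
  have hq1 : HasFPowerSeriesOnBall Complex.tan qC 0 1 := hgCball.congr gC_eq_tan
  have hqq := hq1.hasFPowerSeriesAt.eq_formalMultilinearSeries hp.hasFPowerSeriesAt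
  rw [← hqq] at hp
  have hxmem : (x : ℂ) ∈ Metric.eball (0 : ℂ) (R : ENNReal) := by
    rw [Metric.mem_eball, edist_dist, dist_zero_right, Complex.norm_real, Real.norm_eq_abs]
    rw [show ((R : ENNReal)) = ENNReal.ofReal (R : ℝ) from (ENNReal.ofReal_coe_nnreal).symm]
    exact (ENNReal.ofReal_lt_ofReal_iff (by positivity)).mpr hxR
  have hsum := hp.hasSum hxmem
  rw [zero_add] at hsum
  simp only [qC, FormalMultilinearSeries.ofScalars_apply_eq, smul_eq_mul] at hsum
  have hre := hsum.mapL Complex.reCLM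
  have htm : (fun m => Complex.reCLM (cC m * (x : ℂ) ^ m)) = fun m => cSeq m * x ^ m := by
    funext m
    simp only [Complex.reCLM_apply, cC]
    rw [← Complex.ofReal_pow, ← Complex.ofReal_mul, Complex.ofReal_re]
  rw [htm] at hre
  have htt : Complex.reCLM (Complex.tan (x : ℂ)) = Real.tan x := by
    rw [← Complex.ofReal_tan, Complex.reCLM_apply, Complex.ofReal_re]
  rw [htt] at hre
  have h1 : ∀ m ∉ Set.range (fun n : ℕ => 2 * n + 1), cSeq m * x ^ m = 0 := by
    intro m hm
    have hpm : m % 2 = 0 := by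
      by_contra h2
      exact hm ⟨m / 2, show 2 * (m / 2) + 1 = m by omega⟩
    rw [cSeq_even m hpm, zero_mul]
  have h2 := (Function.Injective.hasSum_iff (g := fun n : ℕ => 2 * n + 1)
    (fun a b hab => by
      have hab' : 2 * a + 1 = 2 * b + 1 := hab
      omega) h1).mpr hre
  have h3 : ((fun m => cSeq m * x ^ m) ∘ fun n : ℕ => 2 * n + 1) = fun n : ℕ =>
      (altEuler (2 * n + 1) : ℝ) * x ^ (2 * n + 1) / (Nat.factorial (2 * n + 1) : ℝ) := by
    funext n
    show cSeq (2 * n + 1) * x ^ (2 * n + 1) = _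
    rw [cSeq_odd]
    unfold aSeq
    ring
  rw [h3] at h2
  exact h2
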